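/- Commutation of marginal and synthesis operators: let A, B, C ⊆ [n] with |A| ≥ 2, |B| ≥ 2 and A ∪ B ⊆ C, and let F ∈ L(Γ(A)). If |A ∩ B| ≥ 2, then M_B(φ_C F) = φ_B(M_{A∩B} F). If |A ∩ B| ≤ 1, then M_B(φ_C F) = ((Σ_{π∈Γ(A)} F(π))/|B|!)·1_{Γ(B)}. -/

import Mathlib

open Finset
open scoped List

abbrev Word (n : ℕ) := List (Fin n)

/-- `Γ(A)`: duplicate-free words whose set of letters is exactly `A`. -/
noncomputable def rankings (n : ℕ) (A : Finset (Fin n)) : Finset (Word n) :=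
  A.toList.permutations.toFinset

/-- All duplicate-free words on `[n]`. -/
noncomputable def allWords (n : ℕ) : Finset (Word n) :=
  Finset.univ.biUnion fun A : Finset (Fin n) => rankings n A

def IsRanking {n : ℕ} (A : Finset (Fin n)) (w : Word n) : Prop :=
  w.Nodup ∧ w.toFinset = A

instance {n : ℕ} (A : Finset (Fin n)) (w : Word n) : Decidable (IsRanking A w) :=
  inferInstanceAs (Decidable (w.Nodup ∧ w.toFinset = A))

/-- Membership in `L(Γ(A))`: functions supported on `Γ(A)`. -/
def MemL {n : ℕ} (A : Finset (Fin n)) (F : Word n → ℝ) : Prop :=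
  ∀ w, F w ≠ 0 → IsRanking A w

/-- Marginal operator `M_B` (with the convention `M_∅ F = (Σ F)·δ_0̄`). -/
noncomputable def marg {n : ℕ} (B : Finset (Fin n)) (F : Word n → ℝ) : Word n → ℝ :=
  fun π => if IsRanking B π then ∑ σ ∈ allWords n, (if π <+ σ then F σ else 0) else 0

/-- Membership in the localization space `H_B` (for `B = ∅` this is `L(Γ(∅)) = ℝ·δ_0̄`). -/
def MemH {n : ℕ} (B : Finset (Fin n)) (F : Word n → ℝ) : Prop :=
  MemL B F ∧
    (∀ B' : Finset (Fin n), B' ⊂ B → 2 ≤ B'.card → marg B' F = 0) ∧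
    (2 ≤ B.card → ∑ π ∈ rankings n B, F π = 0)

/-- `P̄(A) = {B ⊆ A : |B| ≥ 2} ∪ {∅}`. -/
def Pbar {n : ℕ} (A : Finset (Fin n)) : Finset (Finset (Fin n)) :=
  A.powerset.filter fun B => 2 ≤ B.card ∨ B = ∅

/-- Synthesis operator `φ_A`. -/
noncomputable def synth {n : ℕ} (A : Finset (Fin n)) (F : Word n → ℝ) : Word n → ℝ :=
  fun σ =>
    if IsRanking A σ then
      F [] / (Nat.factorial A.card : ℝ) +
        ∑ π ∈ allWords n,
          (if π ≠ [] ∧ π <:+: σ then F π / (Nat.factorial (A.card - π.length + 1) : ℝ) else 0)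
    else 0

/-- Dirac function `δ_π`. -/
noncomputable def dirac {n : ℕ} (π : Word n) : Word n → ℝ :=
  fun w => if w = π then 1 else 0

/-- `σ|_C`: the induced word of `σ` on `C`. -/
def restrictWord {n : ℕ} (σ : Word n) (C : Finset (Fin n)) : Word n :=
  σ.filter fun a => decide (a ∈ C)

lemma mem_rankings {n : ℕ} {A : Finset (Fin n)} {w : Word n} :
    w ∈ rankings n A ↔ IsRanking A w := by
  simp only [rankings, List.mem_toFinset, List.mem_permutations, IsRanking]
  constructor
  · intro h
    exact ⟨h.symm.nodup A.nodup_toList, by rw [List.toFinset_eq_of_perm _ _ h]; simp⟩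
  · rintro ⟨h1, h2⟩
    exact List.perm_of_nodup_nodup_toFinset_eq h1 A.nodup_toList (by rw [h2]; simp)

lemma mem_allWords {n : ℕ} {w : Word n} : w ∈ allWords n ↔ w.Nodup := by
  simp only [allWords, Finset.mem_biUnion, Finset.mem_univ, true_and, mem_rankings, IsRanking]
  constructor
  · rintro ⟨A, h, -⟩; exact h
  · intro h; exact ⟨w.toFinset, h, rfl⟩

lemma IsRanking.length {n : ℕ} {A : Finset (Fin n)} {w : Word n} (h : IsRanking A w) :
    w.length = A.card := by
  rw [← h.2, List.toFinset_card_of_nodup h.1]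

variable {α : Type*} [DecidableEq α]

lemma myIdxOf_insertIdx (x : α) : ∀ (i : ℕ) (l : List α), x ∉ l → i ≤ l.length →
    (l.insertIdx i x).idxOf x = i
  | 0, l, _, _ => by simp [List.insertIdx_zero]
  | (i+1), [], _, h => by simp at h
  | (i+1), a :: t, hx, h => by
    have hax : a ≠ x := fun e => hx (e ▸ (List.mem_cons_self (a := a) (l := t)))
    rw [List.insertIdx_succ_cons, List.idxOf_cons_ne _ hax,
      myIdxOf_insertIdx x i t (fun hm => hx (List.mem_cons_of_mem _ hm)) (by simpa using h)]

lemma myErase_insertIdx (x : α) : ∀ (i : ℕ) (l : List α), x ∉ l → i ≤ l.length →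
    (l.insertIdx i x).erase x = l
  | 0, l, _, _ => by simp [List.insertIdx_zero]
  | (i+1), [], _, h => by simp at h
  | (i+1), a :: t, hx, h => by
    have hax : a ≠ x := fun e => hx (e ▸ (List.mem_cons_self (a := a) (l := t)))
    rw [List.insertIdx_succ_cons, List.erase_cons_tail (by simpa using Ne.symm hax ∘ Eq.symm),
      myErase_insertIdx x i t (fun hm => hx (List.mem_cons_of_mem _ hm)) (by simpa using h)]

lemma myInsertIdx_indexOf_erase (x : α) : ∀ (l : List α), x ∈ l →
    (l.erase x).insertIdx (l.idxOf x) x = l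
  | a :: t, h => by
    by_cases hax : a = x
    · subst hax; simp [List.idxOf_cons_self, List.insertIdx_zero]
    · rw [List.idxOf_cons_ne _ hax, List.erase_cons_tail (by simpa using hax),
        List.insertIdx_succ_cons,
        myInsertIdx_indexOf_erase x t ((List.mem_cons.1 h).resolve_left (fun e => hax e.symm))]

lemma toFinset_erase' {α : Type*} [DecidableEq α] {l : List α} (h : l.Nodup) (a : α) :
    (l.erase a).toFinset = l.toFinset.erase a := by
  ext x
  simp [h.mem_erase_iff, Finset.mem_erase]

lemma sublist_erase_of_not_mem {α : Type*} [DecidableEq α] {a : α} {u l : List α} (h : u <+ l)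
    (hn : l.Nodup) (hx : a ∉ u) : u <+ l.erase a := by
  have h1 : u.filter (fun x => x != a) = u :=
    List.filter_eq_self.2 (fun x hxu => by
      simp only [bne_iff_ne, ne_eq]
      exact fun e => hx (by rwa [e] at hxu))
  rw [hn.erase_eq_filter a, ← h1]
  exact h.filter _

lemma count_sublist_aux {n : ℕ} (u : Word n) (hu : u.Nodup) : ∀ (d : ℕ) (S : Finset (Fin n)),
    u.toFinset ⊆ S → S.card = u.length + d →
    ((allWords n).filter (fun τ => IsRanking S τ ∧ u <+ τ)).card * u.length.factorial
      = S.card.factorial := by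
  intro d
  induction d with
  | zero =>
    intro S hsub hcard
    have hufin : u.toFinset.card = u.length := List.toFinset_card_of_nodup hu
    have hUS : u.toFinset = S :=
      Finset.eq_of_subset_of_card_le hsub (by omega)
    have hfilt : (allWords n).filter (fun τ => IsRanking S τ ∧ u <+ τ) = {u} := by
      ext τ
      simp only [Finset.mem_filter, Finset.mem_singleton, mem_allWords]
      constructor
      · rintro ⟨h1, h2, h3⟩
        have hlen : u.length = τ.length := by
          rw [IsRanking.length h2, hcard]; omega
        exact (List.Sublist.eq_of_length h3 hlen).symm
      · rintro rfl
        exact ⟨hu, ⟨hu, hUS⟩, List.Sublist.refl _⟩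
    rw [hfilt]
    simp [hcard]
  | succ d ih =>
    intro S hsub hcard
    have hufin : u.toFinset.card = u.length := List.toFinset_card_of_nodup hu
    have hx : (S \ u.toFinset).Nonempty := by
      rw [← Finset.card_pos, Finset.card_sdiff_of_subset hsub]
      omega
    obtain ⟨x, hxmem⟩ := hx
    have hxS : x ∈ S := (Finset.mem_sdiff.1 hxmem).1
    have hxu : x ∉ u.toFinset := (Finset.mem_sdiff.1 hxmem).2
    have hxu' : x ∉ u := fun h => hxu (List.mem_toFinset.2 h)
    set S' := S.erase x with hS'
    have hsub' : u.toFinset ⊆ S' := fun y hy =>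
      Finset.mem_erase.2 ⟨fun e => hxu (e ▸ hy), hsub hy⟩
    have hcard' : S'.card = u.length + d := by
      rw [hS', Finset.card_erase_of_mem hxS]; omega
    have key : ((allWords n).filter (fun τ => IsRanking S τ ∧ u <+ τ)).card
        = ((Finset.range S.card) ×ˢ ((allWords n).filter (fun τ => IsRanking S' τ ∧ u <+ τ))).card := by
      refine Finset.card_bij' (fun τ _ => ((τ.idxOf x), τ.erase x))
        (fun p _ => p.2.insertIdx p.1 x) ?hi ?hj ?hleft ?hright
      case hi =>
        rintro τ hτ
        simp only [Finset.mem_filter, mem_allWords] at hτ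
        obtain ⟨h1, ⟨h2, h3⟩, h4⟩ := hτ
        have hxτ : x ∈ τ := by rw [← List.mem_toFinset, h3]; exact hxS
        have hlen : τ.length = S.card := by
          rw [← List.toFinset_card_of_nodup h2, h3]
        simp only [Finset.mem_product, Finset.mem_range, Finset.mem_filter, mem_allWords]
        refine ⟨by rw [← hlen]; exact List.idxOf_lt_length_iff.2 hxτ,
          h2.erase x, ⟨h2.erase x, ?_⟩, sublist_erase_of_not_mem h4 h2 hxu'⟩
        rw [toFinset_erase' h2, h3]
      case hj =>
        rintro ⟨i, τ'⟩ hp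
        simp only [Finset.mem_product, Finset.mem_range, Finset.mem_filter, mem_allWords] at hp
        obtain ⟨hi, h1, ⟨h2, h3⟩, h4⟩ := hp
        have hxτ' : x ∉ τ' := fun h => by
          have := List.mem_toFinset.2 h
          rw [h3] at this
          exact (Finset.mem_erase.1 this).1 rfl
        have hlen' : τ'.length = S.card - 1 := by
          rw [← List.toFinset_card_of_nodup h2, h3, hS', Finset.card_erase_of_mem hxS]
        have hile : i ≤ τ'.length := by omega
        have hperm : τ'.insertIdx i x ~ x :: τ' := List.perm_insertIdx x τ' hile
        simp only [Finset.mem_filter, mem_allWords]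
        have hnd : (τ'.insertIdx i x).Nodup := hperm.symm.nodup (by simp [h2, hxτ'])
        refine ⟨hnd, ⟨hnd, ?_⟩, ?_⟩
        · rw [List.toFinset_eq_of_perm _ _ hperm]
          simp only [List.toFinset_cons, h3, hS']
          exact Finset.insert_erase hxS
        · exact h4.trans (by
            have := List.eraseIdx_sublist (τ'.insertIdx i x) i
            rwa [List.eraseIdx_insertIdx_self x] at this)
      case hleft =>
        rintro τ hτ
        simp only [Finset.mem_filter, mem_allWords] at hτ
        obtain ⟨h1, ⟨h2, h3⟩, h4⟩ := hτ
        have hxτ : x ∈ τ := by rw [← List.mem_toFinset, h3]; exact hxS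
        exact myInsertIdx_indexOf_erase x τ hxτ
      case hright =>
        rintro ⟨i, τ'⟩ hp
        simp only [Finset.mem_product, Finset.mem_range, Finset.mem_filter, mem_allWords] at hp
        obtain ⟨hi, h1, ⟨h2, h3⟩, h4⟩ := hp
        have hxτ' : x ∉ τ' := fun h => by
          have := List.mem_toFinset.2 h
          rw [h3] at this
          exact (Finset.mem_erase.1 this).1 rfl
        have hlen' : τ'.length = S.card - 1 := by
          rw [← List.toFinset_card_of_nodup h2, h3, hS', Finset.card_erase_of_mem hxS]
        have hile : i ≤ τ'.length := by omega
        rw [Prod.ext_iff]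
        exact ⟨myIdxOf_insertIdx x i τ' hxτ' hile, myErase_insertIdx x i τ' hxτ' hile⟩
    rw [key, Finset.card_product, Finset.card_range, mul_assoc,
      ih S' hsub' hcard', hcard, hcard']
    rw [show u.length + (d + 1) = (u.length + d) + 1 by ring, Nat.factorial_succ]

/-- Wrapper for the counting lemma. -/
lemma count_sublist {n : ℕ} (u : Word n) (hu : u.Nodup) (S : Finset (Fin n))
    (hsub : u.toFinset ⊆ S) :
    ((allWords n).filter (fun τ => IsRanking S τ ∧ u <+ τ)).card * u.length.factorial
      = S.card.factorial := by
  have h1 : u.toFinset.card = u.length := List.toFinset_card_of_nodup hu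
  have h2 : u.length ≤ S.card := by
    have := Finset.card_le_card hsub; omega
  exact count_sublist_aux u hu (S.card - u.length) S hsub (by omega)

/-- Expansion map: replace the letter `h` by the block `π`. -/
def Ex {n : ℕ} (h : Fin n) (π : Word n) (l : Word n) : Word n :=
  l.flatMap (fun x => if x = h then π else [x])

lemma Ex_of_not_mem {n : ℕ} {h : Fin n} {π : Word n} : ∀ {l : Word n}, h ∉ l → Ex h π l = l
  | [], _ => rfl
  | a :: t, hl => by
    have ha : a ≠ h := fun e => hl (e ▸ (List.mem_cons_self (a := a) (l := t)))
    rw [Ex, List.flatMap_cons, if_neg ha]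
    have := Ex_of_not_mem (π := π) (fun hm => hl (List.mem_cons_of_mem _ hm) : h ∉ t)
    rw [Ex] at this
    rw [this]
    rfl

lemma Ex_append {n : ℕ} (h : Fin n) (π : Word n) (s t : Word n) :
    Ex h π (s ++ t) = Ex h π s ++ Ex h π t :=
  List.flatMap_append

lemma Ex_cons_self {n : ℕ} (h : Fin n) (π : Word n) (t : Word n) :
    Ex h π (h :: t) = π ++ Ex h π t := by
  rw [Ex, List.flatMap_cons, if_pos rfl]; rfl

lemma Ex_mono {n : ℕ} (h : Fin n) (π : Word n) {l₁ l₂ : Word n} (hs : l₁ <+ l₂) :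
    Ex h π l₁ <+ Ex h π l₂ := by
  induction hs with
  | slnil => exact List.Sublist.refl _
  | @cons m₁ m₂ a hs ih =>
    have e : Ex h π (a :: m₂) = (if a = h then π else [a]) ++ Ex h π m₂ :=
      List.flatMap_cons ..
    rw [e]
    exact ih.trans (List.sublist_append_right _ _)
  | @cons_cons m₁ m₂ a hs ih =>
    have e1 : Ex h π (a :: m₁) = (if a = h then π else [a]) ++ Ex h π m₁ :=
      List.flatMap_cons ..
    have e2 : Ex h π (a :: m₂) = (if a = h then π else [a]) ++ Ex h π m₂ :=
      List.flatMap_cons ..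
    rw [e1, e2]
    exact ih.append_left _

lemma filter_eq_singleton {n : ℕ} {h : Fin n} : ∀ {l : Word n}, l.Nodup → h ∈ l →
    l.filter (fun x => decide (x = h)) = [h]
  | a :: t, hn, hm => by
    by_cases ha : a = h
    · subst ha
      rw [List.filter_cons_of_pos (by simp)]
      have : t.filter (fun x => decide (x = a)) = [] :=
        List.filter_eq_nil_iff.2 (fun x hx => by
          simp only [decide_eq_true_eq]
          exact fun e => (List.nodup_cons.1 hn).1 (e ▸ hx))
      rw [this]
    · rw [List.filter_cons_of_neg (by simpa using ha)]
      exact filter_eq_singleton (List.nodup_cons.1 hn).2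
        ((List.mem_cons.1 hm).resolve_left (fun e => ha e.symm))

lemma count_key {n : ℕ} (C Cp : Finset (Fin n)) (h : Fin n) (π σ σp : Word n)
    (hπn : π.Nodup) (hhπ : h ∈ π) (hπC : π.toFinset ⊆ C)
    (hCp : Cp = insert h (C \ π.toFinset))
    (hfilt : σ.filter (fun a => decide (a ∈ Cp)) = σp)
    (hsub : σ <+ Ex h π σp) :
    ((allWords n).filter (fun τ => IsRanking C τ ∧ σ <+ τ ∧ π <:+: τ)).card
      = ((allWords n).filter (fun τ => IsRanking Cp τ ∧ σp <+ τ)).card := by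
  have hhCp : h ∈ Cp := by rw [hCp]; exact Finset.mem_insert_self _ _
  have hCpC : Cp ⊆ C := by
    rw [hCp]
    intro x hx
    rcases Finset.mem_insert.1 hx with e | hx'
    · exact hπC (e ▸ List.mem_toFinset.2 hhπ)
    · exact (Finset.mem_sdiff.1 hx').1
  have hmemCp : ∀ x, x ∈ C → x ∉ π → x ∈ Cp := by
    intro x hx1 hx2
    rw [hCp]
    exact Finset.mem_insert.2 (Or.inr (Finset.mem_sdiff.2 ⟨hx1, fun hm => hx2 (List.mem_toFinset.1 hm)⟩))
  have hπCp : ∀ x ∈ π, (x ∈ Cp ↔ x = h) := by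
    intro x hx
    constructor
    · intro hxc
      rw [hCp] at hxc
      rcases Finset.mem_insert.1 hxc with e | hx'
      · exact e
      · exact absurd (List.mem_toFinset.2 hx) (Finset.mem_sdiff.1 hx').2
    · rintro rfl; exact hhCp
  refine Finset.card_bij' (fun τ _ => τ.filter (fun a => decide (a ∈ Cp)))
    (fun τ' _ => Ex h π τ') ?hi ?hj ?hleft ?hright
  case hi =>
    rintro τ hτ
    simp only [Finset.mem_filter, mem_allWords] at hτ ⊢
    obtain ⟨h1, ⟨h2n, h2t⟩, hσ, hinf⟩ := hτ
    refine ⟨h2n.filter _, ⟨h2n.filter _, ?_⟩, hfilt ▸ hσ.filter _⟩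
    ext x
    simp only [List.mem_toFinset, List.mem_filter, decide_eq_true_eq]
    constructor
    · rintro ⟨-, hx2⟩; exact hx2
    · intro hx
      exact ⟨List.mem_toFinset.1 (h2t ▸ hCpC hx), hx⟩
  case hj =>
    rintro τ' hτ'
    simp only [Finset.mem_filter, mem_allWords] at hτ' ⊢
    obtain ⟨h1, ⟨h2n, h2t⟩, hσp⟩ := hτ'
    have hhτ' : h ∈ τ' := List.mem_toFinset.1 (h2t ▸ hhCp)
    obtain ⟨p, q, rfl⟩ := List.mem_iff_append.1 hhτ'
    have hnodup' := h2n
    rw [List.nodup_middle, List.nodup_cons, List.nodup_append] at hnodup'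
    obtain ⟨hhpq, hpn, hqn, hpq⟩ := hnodup'
    have hhp : h ∉ p := fun hm => hhpq (List.mem_append.2 (Or.inl hm))
    have hhq : h ∉ q := fun hm => hhpq (List.mem_append.2 (Or.inr hm))
    have hE : Ex h π (p ++ h :: q) = p ++ π ++ q := by
      rw [Ex_append, Ex_cons_self, Ex_of_not_mem hhp, Ex_of_not_mem hhq, ← List.append_assoc]
    have hpCp : ∀ x ∈ p, x ∈ Cp := fun x hx =>
      h2t ▸ List.mem_toFinset.2 (List.mem_append.2 (Or.inl hx))
    have hqCp : ∀ x ∈ q, x ∈ Cp := fun x hx =>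
      h2t ▸ List.mem_toFinset.2 (by simp [hx])
    have hpπ : ∀ x ∈ p, x ∉ π := fun x hx hm =>
      hhp (((hπCp x hm).1 (hpCp x hx)) ▸ hx)
    have hqπ : ∀ x ∈ q, x ∉ π := fun x hx hm =>
      hhq (((hπCp x hm).1 (hqCp x hx)) ▸ hx)
    rw [hE]
    have hnodup2 : (p ++ π ++ q).Nodup := by
      rw [List.append_assoc, List.nodup_append]
      refine ⟨hpn, List.Nodup.append hπn hqn (fun x hx hx' => hqπ x hx' hx), ?_⟩
      intro x hxp y hx' hxy
      subst hxy
      rcases List.mem_append.1 hx' with hm | hm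
      · exact hpπ x hxp hm
      · exact hpq x hxp x hm rfl
    refine ⟨hnodup2, ⟨hnodup2, ?_⟩, hE ▸ (hsub.trans (Ex_mono h π hσp)), p, q, rfl⟩
    -- toFinset = C
    ext x
    simp only [List.toFinset_append, Finset.mem_union, List.mem_toFinset]
    have hCp' : x ∈ Cp ↔ (x = h ∨ x ∈ p ∨ x ∈ q) := by
      rw [← h2t]
      simp only [List.toFinset_append, List.toFinset_cons, Finset.mem_union,
        Finset.mem_insert, List.mem_toFinset]
      tauto
    constructor
    · rintro ((hx | hx) | hx)
      · exact hCpC (hpCp x hx)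
      · exact hπC (List.mem_toFinset.2 hx)
      · exact hCpC (hqCp x hx)
    · intro hx
      by_cases hxπ : x ∈ π
      · exact Or.inl (Or.inr hxπ)
      · rcases hCp'.1 (hmemCp x hx hxπ) with e | hm | hm
        · exact absurd (e ▸ hhπ) hxπ
        · exact Or.inl (Or.inl hm)
        · exact Or.inr hm
  case hleft =>
    rintro τ hτ
    simp only [Finset.mem_filter, mem_allWords] at hτ
    obtain ⟨h1, ⟨h2n, h2t⟩, hσ, hinf⟩ := hτ
    obtain ⟨p, q, rfl⟩ := hinf
    have hnd := h2n
    rw [List.append_assoc, List.nodup_append] at hnd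
    obtain ⟨hpn, hπqn, hpd⟩ := hnd
    rw [List.nodup_append] at hπqn
    obtain ⟨-, hqn, hπq⟩ := hπqn
    have hpC : ∀ x ∈ p, x ∈ C := fun x hx =>
      h2t ▸ List.mem_toFinset.2 (by simp [hx])
    have hqC : ∀ x ∈ q, x ∈ C := fun x hx =>
      h2t ▸ List.mem_toFinset.2 (by simp [hx])
    have hpπ : ∀ x ∈ p, x ∉ π := fun x hx hm => hpd x hx x (List.mem_append.2 (Or.inl hm)) rfl
    have hfp : p.filter (fun a => decide (a ∈ Cp)) = p :=
      List.filter_eq_self.2 (fun x hx => by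
        simp only [decide_eq_true_eq]
        exact hmemCp x (hpC x hx) (hpπ x hx))
    have hfq : q.filter (fun a => decide (a ∈ Cp)) = q :=
      List.filter_eq_self.2 (fun x hx => by
        simp only [decide_eq_true_eq]
        exact hmemCp x (hqC x hx) (fun hm => hπq x hm x hx rfl))
    have hfπ : π.filter (fun a => decide (a ∈ Cp)) = [h] := by
      rw [List.filter_congr (fun x hx => ?_), filter_eq_singleton hπn hhπ]
      simp only [decide_eq_decide]
      exact hπCp x hx
    have hhp : h ∉ p := fun hm => hpπ h hm hhπ
    have hhq : h ∉ q := fun hm => hπq h hhπ h hm rfl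
    show Ex h π ((p ++ π ++ q).filter (fun a => decide (a ∈ Cp))) = p ++ π ++ q
    rw [List.filter_append, List.filter_append, hfp, hfq, hfπ,
      Ex_append, Ex_append, Ex_of_not_mem hhp, Ex_of_not_mem hhq,
      show Ex h π [h] = π ++ Ex h π [] from Ex_cons_self h π []]
    show p ++ (π ++ Ex h π []) ++ q = p ++ π ++ q
    rw [show Ex h π ([] : Word n) = [] from rfl, List.append_nil]
  case hright =>
    rintro τ' hτ'
    simp only [Finset.mem_filter, mem_allWords] at hτ'
    obtain ⟨h1, ⟨h2n, h2t⟩, hσp⟩ := hτ'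
    have hhτ' : h ∈ τ' := List.mem_toFinset.1 (h2t ▸ hhCp)
    obtain ⟨p, q, rfl⟩ := List.mem_iff_append.1 hhτ'
    have hnodup' := h2n
    rw [List.nodup_middle, List.nodup_cons, List.nodup_append] at hnodup'
    obtain ⟨hhpq, hpn, hqn, hpq⟩ := hnodup'
    have hhp : h ∉ p := fun hm => hhpq (List.mem_append.2 (Or.inl hm))
    have hhq : h ∉ q := fun hm => hhpq (List.mem_append.2 (Or.inr hm))
    have hE : Ex h π (p ++ h :: q) = p ++ π ++ q := by
      rw [Ex_append, Ex_cons_self, Ex_of_not_mem hhp, Ex_of_not_mem hhq, ← List.append_assoc]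
    have hpCp : ∀ x ∈ p, x ∈ Cp := fun x hx =>
      h2t ▸ List.mem_toFinset.2 (List.mem_append.2 (Or.inl hx))
    have hqCp : ∀ x ∈ q, x ∈ Cp := fun x hx =>
      h2t ▸ List.mem_toFinset.2 (by simp [hx])
    have hfp : p.filter (fun a => decide (a ∈ Cp)) = p :=
      List.filter_eq_self.2 (fun x hx => by
        simp only [decide_eq_true_eq]; exact hpCp x hx)
    have hfq : q.filter (fun a => decide (a ∈ Cp)) = q :=
      List.filter_eq_self.2 (fun x hx => by
        simp only [decide_eq_true_eq]; exact hqCp x hx)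
    have hfπ : π.filter (fun a => decide (a ∈ Cp)) = [h] := by
      rw [List.filter_congr (fun x hx => ?_), filter_eq_singleton hπn hhπ]
      simp only [decide_eq_decide]
      exact hπCp x hx
    show (Ex h π (p ++ h :: q)).filter (fun a => decide (a ∈ Cp)) = p ++ h :: q
    rw [hE, List.filter_append, List.filter_append, hfp, hfq, hfπ]
    simp

section Nlemmas

variable {n : ℕ} {A B C : Finset (Fin n)} {σ w : Word n}

/-- toFinset of the restriction of `w ∈ Γ(A)` to `B` is `A ∩ B`. -/
lemma restrict_toFinset (hw : IsRanking A w) :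
    (w.filter (fun a => decide (a ∈ B))).toFinset = A ∩ B := by
  ext x
  simp only [List.mem_toFinset, List.mem_filter, decide_eq_true_eq, Finset.mem_inter,
    ← hw.2, List.mem_toFinset]

lemma restrict_length (hw : IsRanking A w) :
    (w.filter (fun a => decide (a ∈ B))).length = (A ∩ B).card := by
  rw [← restrict_toFinset (B := B) hw,
    List.toFinset_card_of_nodup (hw.1.filter _)]

/-- If `σ <+ τ` and `w <:+: τ` for a common ranking `τ` of `C`, then the restriction of `w`
to `B` is an infix of `σ`. -/
lemma infix_of_common (hσ : IsRanking B σ) (hw : IsRanking A w) {τ : Word n}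
    (hτ : IsRanking C τ) (h1 : σ <+ τ) (h2 : w <:+: τ) :
    (w.filter (fun a => decide (a ∈ B))) <:+: σ := by
  obtain ⟨p, q, rfl⟩ := h2
  set ρ := w.filter (fun a => decide (a ∈ B)) with hρ
  have hρfin : ρ.toFinset = A ∩ B := restrict_toFinset hw
  have hnd := hτ.1
  rw [List.append_assoc, List.nodup_append] at hnd
  obtain ⟨hpn, hwqn, hpd⟩ := hnd
  rw [List.nodup_append] at hwqn
  obtain ⟨-, hqn, hwq⟩ := hwqn
  rw [List.sublist_append_iff] at h1
  obtain ⟨y, t, rfl, hy, ht⟩ := h1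
  rw [List.sublist_append_iff] at hy
  obtain ⟨s, m, rfl, hs, hm⟩ := hy
  -- m = ρ
  have hσnd := hσ.1
  have hsA : ∀ x ∈ s, x ∉ A := fun x hx hxA =>
    hpd x (hs.mem hx) x (List.mem_append.2 (Or.inl (by
      rw [← hw.2] at hxA; exact List.mem_toFinset.1 hxA))) rfl
  have htA : ∀ x ∈ t, x ∉ A := fun x hx hxA =>
    hwq x (by rw [← hw.2] at hxA; exact List.mem_toFinset.1 hxA) x (ht.mem hx) rfl
  have hmfin : m.toFinset = A ∩ B := by
    ext x
    simp only [List.mem_toFinset, Finset.mem_inter]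
    constructor
    · intro hx
      refine ⟨by rw [← hw.2]; exact List.mem_toFinset.2 (hm.mem hx), ?_⟩
      rw [← hσ.2]
      simp [hx]
    · rintro ⟨hxA, hxB⟩
      have hxσ : x ∈ s ++ m ++ t := by
        rw [← List.mem_toFinset, hσ.2]; exact hxB
      rcases List.mem_append.1 hxσ with hx' | hx'
      · rcases List.mem_append.1 hx' with hx'' | hx''
        · exact absurd hxA (hsA x hx'')
        · exact hx''
      · exact absurd hxA (htA x hx')
  have hmn : m.Nodup := hw.1.sublist hm
  have hmρ : m <+ ρ := by
    have e : m.filter (fun a => decide (a ∈ B)) = m :=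
      List.filter_eq_self.2 (fun x hx => by
        simp only [decide_eq_true_eq]
        have : x ∈ m.toFinset := List.mem_toFinset.2 hx
        rw [hmfin] at this
        exact (Finset.mem_inter.1 this).2)
    rw [← e, hρ]
    exact hm.filter _
  have hlen : m.length = ρ.length := by
    rw [← List.toFinset_card_of_nodup hmn, ← List.toFinset_card_of_nodup (hw.1.filter _), hmfin,
      ← hρ, hρfin]
  exact ⟨s, t, by rw [hmρ.eq_of_length hlen]⟩

end Nlemmas

section Ncount

variable {n : ℕ} {A B C : Finset (Fin n)} {σ w : Word n}

lemma count_pos (hσ : IsRanking B σ) (hw : IsRanking A w) (hAC : A ⊆ C) (hBC : B ⊆ C)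
    (hρσ : (w.filter (fun a => decide (a ∈ B))) <:+: σ)
    (hρne : w.filter (fun a => decide (a ∈ B)) ≠ []) :
    ((allWords n).filter (fun τ => IsRanking C τ ∧ σ <+ τ ∧ w <:+: τ)).card
      * (B.card - (A ∩ B).card + 1).factorial = (C.card - A.card + 1).factorial := by
  set ρ := w.filter (fun a => decide (a ∈ B)) with hρdef
  have hρn : ρ.Nodup := hw.1.filter _
  have hρfin : ρ.toFinset = A ∩ B := restrict_toFinset hw
  have hρlen : ρ.length = (A ∩ B).card := restrict_length hw
  set h := ρ.head hρne with hh
  have hhρ : h ∈ ρ := List.head_mem hρne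
  have hhw : h ∈ w := List.mem_of_mem_filter hhρ
  have hhA : h ∈ A := by rw [← hw.2]; exact List.mem_toFinset.2 hhw
  set Cp := insert h (C \ A) with hCpdef
  obtain ⟨s, t, hσdec⟩ := hρσ
  have hhCp : h ∈ Cp := Finset.mem_insert_self _ _
  -- nodup structure of σ
  have hσnd : (s ++ ρ ++ t).Nodup := by rw [hσdec]; exact hσ.1
  have hnd := hσnd
  rw [List.append_assoc, List.nodup_append] at hnd
  obtain ⟨hsn, hρtn, hsd⟩ := hnd
  rw [List.nodup_append] at hρtn
  obtain ⟨-, htn, hρt⟩ := hρtn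
  have hsB : ∀ x ∈ s, x ∈ B := fun x hx => by
    rw [← hσ.2, ← hσdec]; simp [hx]
  have htB : ∀ x ∈ t, x ∈ B := fun x hx => by
    rw [← hσ.2, ← hσdec]; simp [hx]
  have hsA : ∀ x ∈ s, x ∉ A := fun x hx hxA =>
    hsd x hx x (List.mem_append.2 (Or.inl (by
      rw [← List.mem_toFinset, hρfin]
      exact Finset.mem_inter.2 ⟨hxA, hsB x hx⟩))) rfl
  have htA : ∀ x ∈ t, x ∉ A := fun x hx hxA =>
    hρt x (by
      rw [← List.mem_toFinset, hρfin]
      exact Finset.mem_inter.2 ⟨hxA, htB x hx⟩) x hx rfl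
  have hsCp : ∀ x ∈ s, x ∈ Cp := fun x hx =>
    Finset.mem_insert.2 (Or.inr (Finset.mem_sdiff.2 ⟨hBC (hsB x hx), fun hm => hsA x hx hm⟩))
  have htCp : ∀ x ∈ t, x ∈ Cp := fun x hx =>
    Finset.mem_insert.2 (Or.inr (Finset.mem_sdiff.2 ⟨hBC (htB x hx), fun hm => htA x hx hm⟩))
  have hρCp : ∀ x ∈ ρ, (x ∈ Cp ↔ x = h) := by
    intro x hx
    have hxA : x ∈ A := by
      have := List.mem_toFinset.2 hx
      rw [hρfin] at this
      exact (Finset.mem_inter.1 this).1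
    constructor
    · intro hxc
      rcases Finset.mem_insert.1 hxc with e | hx'
      · exact e
      · exact absurd hxA (Finset.mem_sdiff.1 hx').2
    · rintro rfl; exact hhCp
  have hhs : h ∉ s := fun hm => hsd h hm h (List.mem_append.2 (Or.inl hhρ)) rfl
  have hht : h ∉ t := fun hm => hρt h hhρ h hm rfl
  have hfs : s.filter (fun a => decide (a ∈ Cp)) = s :=
    List.filter_eq_self.2 (fun x hx => by simp only [decide_eq_true_eq]; exact hsCp x hx)
  have hft : t.filter (fun a => decide (a ∈ Cp)) = t :=
    List.filter_eq_self.2 (fun x hx => by simp only [decide_eq_true_eq]; exact htCp x hx)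
  have hfρ : ρ.filter (fun a => decide (a ∈ Cp)) = [h] := by
    have hcongr := List.filter_congr (p := fun a => decide (a ∈ Cp))
      (q := fun a => decide (a = h)) (l := ρ)
      (fun x hx => by
        show decide (x ∈ Cp) = decide (x = h)
        rw [decide_eq_decide]
        exact hρCp x hx)
    rw [hcongr]
    exact filter_eq_singleton hρn hhρ
  have hfilt : σ.filter (fun a => decide (a ∈ Cp)) = s ++ [h] ++ t := by
    rw [← hσdec, List.filter_append, List.filter_append, hfs, hft, hfρ]
  have hsub : σ <+ Ex h w (s ++ [h] ++ t) := by
    rw [Ex_append, Ex_append, Ex_of_not_mem hhs, Ex_of_not_mem hht,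
      show Ex h w [h] = w ++ Ex h w [] from Ex_cons_self h w [],
      show Ex h w ([] : Word n) = [] from rfl, List.append_nil, ← hσdec]
    exact List.Sublist.append (List.Sublist.append (List.Sublist.refl s)
      (List.filter_sublist (l := w))) (List.Sublist.refl t)
  have hkey := count_key C Cp h w σ (s ++ [h] ++ t) hw.1 hhw
    (by rw [hw.2]; exact hAC) (by rw [hw.2]) hfilt hsub
  have hσpn : (s ++ [h] ++ t).Nodup := by
    rw [List.append_assoc, List.nodup_append]
    refine ⟨hsn, ?_, ?_⟩
    · rw [List.nodup_append]
      exact ⟨List.nodup_singleton h, htn, fun x hx y hx' hxy => by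
        rw [List.mem_singleton] at hx
        exact hht (by rw [← hx, hxy]; exact hx')⟩
    · intro x hx y hx' hxy
      rcases List.mem_append.1 hx' with hm | hm
      · rw [List.mem_singleton] at hm
        exact hhs (by rw [← hm, ← hxy]; exact hx)
      · exact hsd x hx y (List.mem_append.2 (Or.inr hm)) hxy
  have hσpsub : (s ++ [h] ++ t).toFinset ⊆ Cp := by
    intro x hx
    simp only [List.toFinset_append, Finset.mem_union, List.mem_toFinset,
      List.mem_singleton] at hx
    rcases hx with (hx | hx) | hx
    · exact hsCp x hx
    · exact hx ▸ hhCp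
    · exact htCp x hx
  have hcount := count_sublist (s ++ [h] ++ t) hσpn Cp hσpsub
  rw [hkey]
  have hlenσ : σ.length = B.card := IsRanking.length hσ
  have hlens : s.length + ρ.length + t.length = B.card := by
    rw [← hlenσ, ← hσdec]; simp; omega
  have hk1 : 1 ≤ (A ∩ B).card := by
    rw [← hρlen]
    exact List.length_pos_iff.2 hρne
  have hkB : (A ∩ B).card ≤ B.card := Finset.card_le_card (Finset.inter_subset_right)
  have hσplen : (s ++ [h] ++ t).length = B.card - (A ∩ B).card + 1 := by
    simp only [List.length_append, List.length_singleton]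
    omega
  have hCpcard : Cp.card = C.card - A.card + 1 := by
    rw [hCpdef, Finset.card_insert_of_notMem (fun hm => (Finset.mem_sdiff.1 hm).2 hhA),
      Finset.card_sdiff_of_subset hAC]
  rw [← hσplen, ← hCpcard]
  exact hcount

lemma count_empty (hσ : IsRanking B σ) (hw : IsRanking A w) (hAC : A ⊆ C) (hBC : B ⊆ C)
    (hAB : A ∩ B = ∅) (hwne : w ≠ []) :
    ((allWords n).filter (fun τ => IsRanking C τ ∧ σ <+ τ ∧ w <:+: τ)).card
      * B.card.factorial = (C.card - A.card + 1).factorial := by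
  set h := w.head hwne with hh
  have hhw : h ∈ w := List.head_mem hwne
  have hhA : h ∈ A := by rw [← hw.2]; exact List.mem_toFinset.2 hhw
  set Cp := insert h (C \ A) with hCpdef
  have hσA : ∀ x ∈ σ, x ∉ A := fun x hx hxA => by
    have hxB : x ∈ B := by rw [← hσ.2]; exact List.mem_toFinset.2 hx
    have : x ∈ A ∩ B := Finset.mem_inter.2 ⟨hxA, hxB⟩
    rw [hAB] at this
    exact absurd this (Finset.notMem_empty x)
  have hσCp : ∀ x ∈ σ, x ∈ Cp := fun x hx =>
    Finset.mem_insert.2 (Or.inr (Finset.mem_sdiff.2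
      ⟨hBC (by rw [← hσ.2]; exact List.mem_toFinset.2 hx), hσA x hx⟩))
  have hfilt : σ.filter (fun a => decide (a ∈ Cp)) = σ :=
    List.filter_eq_self.2 (fun x hx => by simp only [decide_eq_true_eq]; exact hσCp x hx)
  have hhσ : h ∉ σ := fun hm => hσA h hm hhA
  have hsub : σ <+ Ex h w σ := by
    rw [Ex_of_not_mem hhσ]
  have hkey := count_key C Cp h w σ σ hw.1 hhw
    (by rw [hw.2]; exact hAC) (by rw [hw.2]) hfilt hsub
  have hcount := count_sublist σ hσ.1 Cp
    (fun x hx => hσCp x (List.mem_toFinset.1 hx))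
  rw [hkey]
  have hCpcard : Cp.card = C.card - A.card + 1 := by
    rw [hCpdef, Finset.card_insert_of_notMem (fun hm => (Finset.mem_sdiff.1 hm).2 hhA),
      Finset.card_sdiff_of_subset hAC]
  rw [← IsRanking.length hσ, ← hCpcard]
  exact hcount

end Ncount

section MainEval

variable {n : ℕ} {A B C : Finset (Fin n)} {F : Word n → ℝ}

lemma rankings_subset_allWords (A : Finset (Fin n)) : rankings n A ⊆ allWords n :=
  fun w hw => mem_allWords.2 (mem_rankings.1 hw).1

lemma ranking_ne_nil {w : Word n} (hw : IsRanking A w) (hA : 1 ≤ A.card) : w ≠ [] := by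
  intro e
  have h2 := hw.2
  rw [e] at h2
  simp only [List.toFinset_nil] at h2
  rw [← h2] at hA
  simp at hA

lemma memL_nil_eq_zero (hA : 2 ≤ A.card) (hF : MemL A F) : F [] = 0 := by
  by_contra h0
  exact ranking_ne_nil (hF [] h0) (by omega) rfl

lemma marg_synth_eval (hA : 2 ≤ A.card) (hF : MemL A F) {σ : Word n}
    (hσ : IsRanking B σ) :
    marg B (synth C F) σ = ∑ w ∈ rankings n A, F w *
      ((((allWords n).filter (fun τ => IsRanking C τ ∧ σ <+ τ ∧ w <:+: τ)).card : ℝ))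
      / ((C.card - A.card + 1).factorial : ℝ) := by
  have hF0 : F [] = 0 := memL_nil_eq_zero hA hF
  rw [marg, if_pos hσ]
  have step1 : ∀ τ ∈ allWords n, (if σ <+ τ then synth C F τ else 0)
      = ∑ w ∈ rankings n A, (if IsRanking C τ ∧ σ <+ τ ∧ w <:+: τ
          then F w / ((C.card - A.card + 1).factorial : ℝ) else 0) := by
    intro τ hτ
    by_cases h1 : σ <+ τ
    · by_cases h2 : IsRanking C τ
      · rw [if_pos h1, synth, if_pos h2, hF0, zero_div, zero_add]
        have hzero : ∀ w ∈ allWords n, w ∉ rankings n A →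
            (if w ≠ [] ∧ w <:+: τ then F w / ((C.card - w.length + 1).factorial : ℝ) else 0)
              = 0 := by
          intro w hw hwn
          have hFw : F w = 0 := by
            by_contra h0
            exact hwn (mem_rankings.2 (hF w h0))
          simp [hFw]
        rw [← Finset.sum_subset (rankings_subset_allWords A) hzero]
        apply Finset.sum_congr rfl
        intro w hw
        have hwA := mem_rankings.1 hw
        have hwlen : w.length = A.card := IsRanking.length hwA
        have hwne : w ≠ [] := ranking_ne_nil hwA (by omega)
        by_cases h3 : w <:+: τ
        · rw [if_pos ⟨hwne, h3⟩, if_pos ⟨h2, h1, h3⟩, hwlen]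
        · rw [if_neg (by tauto), if_neg (by tauto)]
      · rw [if_pos h1, synth, if_neg h2]
        symm
        apply Finset.sum_eq_zero
        intro w hw
        rw [if_neg (by tauto)]
    · rw [if_neg h1]
      symm
      apply Finset.sum_eq_zero
      intro w hw
      rw [if_neg (by tauto)]
  rw [Finset.sum_congr rfl step1, Finset.sum_comm]
  apply Finset.sum_congr rfl
  intro w hw
  rw [← Finset.sum_filter, Finset.sum_const, nsmul_eq_mul]
  ring

lemma restrict_unique {w ρ' : Word n} (hw : IsRanking A w) :
    (IsRanking (A ∩ B) ρ' ∧ ρ' <+ w) ↔ ρ' = w.filter (fun a => decide (a ∈ B)) := by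
  constructor
  · rintro ⟨hρ', hsub⟩
    have he : ρ'.filter (fun a => decide (a ∈ B)) = ρ' :=
      List.filter_eq_self.2 (fun x hx => by
        simp only [decide_eq_true_eq]
        have : x ∈ A ∩ B := hρ'.2 ▸ List.mem_toFinset.2 hx
        exact (Finset.mem_inter.1 this).2)
    have hsub2 : ρ' <+ w.filter (fun a => decide (a ∈ B)) := he ▸ hsub.filter _
    exact hsub2.eq_of_length (by
      rw [IsRanking.length hρ', restrict_length hw])
  · rintro rfl
    exact ⟨⟨hw.1.filter _, restrict_toFinset hw⟩, List.filter_sublist⟩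

lemma synth_marg_eval (hA : 2 ≤ A.card) (hF : MemL A F) (hk : 2 ≤ (A ∩ B).card)
    {σ : Word n} (hσ : IsRanking B σ) :
    synth B (marg (A ∩ B) F) σ = ∑ w ∈ rankings n A,
      (if (w.filter (fun a => decide (a ∈ B))) <:+: σ
        then F w / (((B.card - (A ∩ B).card + 1).factorial : ℝ)) else 0) := by
  rw [synth, if_pos hσ]
  have hG0 : marg (A ∩ B) F [] = 0 := by
    rw [marg, if_neg]
    intro hr
    have := IsRanking.length hr
    simp at this
    omega
  rw [hG0, zero_div, zero_add]
  have step1 : ∀ ρ' ∈ allWords n,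
      (if ρ' ≠ [] ∧ ρ' <:+: σ
        then marg (A ∩ B) F ρ' / ((B.card - ρ'.length + 1).factorial : ℝ) else 0)
      = ∑ w ∈ rankings n A, (if IsRanking (A ∩ B) ρ' ∧ ρ' <:+: σ ∧ ρ' <+ w
          then F w / ((B.card - (A ∩ B).card + 1).factorial : ℝ) else 0) := by
    intro ρ' hρ'
    by_cases h1 : IsRanking (A ∩ B) ρ' ∧ ρ' <:+: σ
    · have hlen : ρ'.length = (A ∩ B).card := IsRanking.length h1.1
      have hne : ρ' ≠ [] := ranking_ne_nil h1.1 (by omega)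
      rw [if_pos ⟨hne, h1.2⟩, marg, if_pos h1.1, Finset.sum_div, hlen]
      have hzero : ∀ w ∈ allWords n, w ∉ rankings n A →
          (if ρ' <+ w then F w else 0) / ((B.card - (A ∩ B).card + 1).factorial : ℝ) = 0 := by
        intro w hw hwn
        have hFw : F w = 0 := by
          by_contra h0
          exact hwn (mem_rankings.2 (hF w h0))
        simp [hFw]
      rw [← Finset.sum_subset (rankings_subset_allWords A) hzero]
      apply Finset.sum_congr rfl
      intro w hw
      by_cases h3 : ρ' <+ w
      · rw [if_pos h3, if_pos ⟨h1.1, h1.2, h3⟩]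
      · rw [if_neg h3, if_neg (by tauto), zero_div]
    · have hRHS : (∑ w ∈ rankings n A, (if IsRanking (A ∩ B) ρ' ∧ ρ' <:+: σ ∧ ρ' <+ w
          then F w / ((B.card - (A ∩ B).card + 1).factorial : ℝ) else 0)) = 0 :=
        Finset.sum_eq_zero fun w hw => if_neg (by tauto)
      rw [hRHS]
      by_cases h2 : ρ' ≠ [] ∧ ρ' <:+: σ
      · rw [if_pos h2, marg, if_neg (fun hr => h1 ⟨hr, h2.2⟩), zero_div]
      · rw [if_neg h2]
  rw [Finset.sum_congr rfl step1, Finset.sum_comm]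
  apply Finset.sum_congr rfl
  intro w hw
  have hwA := mem_rankings.1 hw
  set ρw := w.filter (fun a => decide (a ∈ B)) with hρw
  have hρwall : ρw ∈ allWords n := mem_allWords.2 (hwA.1.filter _)
  have hcond : ∀ ρ' : Word n, (IsRanking (A ∩ B) ρ' ∧ ρ' <:+: σ ∧ ρ' <+ w)
      ↔ (ρ' = ρw ∧ ρw <:+: σ) := by
    intro ρ'
    constructor
    · rintro ⟨hr, hinf, hsub⟩
      have he : ρ' = ρw := (restrict_unique hwA).1 ⟨hr, hsub⟩
      exact ⟨he, he ▸ hinf⟩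
    · rintro ⟨rfl, hinf⟩
      have := (restrict_unique (B := B) hwA).2 rfl
      exact ⟨this.1, hinf, this.2⟩
  have hcongr : ∀ ρ' ∈ allWords n,
      (if IsRanking (A ∩ B) ρ' ∧ ρ' <:+: σ ∧ ρ' <+ w
        then F w / ((B.card - (A ∩ B).card + 1).factorial : ℝ) else 0)
      = (if ρ' = ρw ∧ ρw <:+: σ
        then F w / ((B.card - (A ∩ B).card + 1).factorial : ℝ) else 0) := by
    intro ρ' _
    exact if_congr (hcond ρ') rfl rfl
  rw [Finset.sum_congr rfl hcongr]
  by_cases hx : ρw <:+: σ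
  · rw [if_pos hx]
    have : ∀ ρ' ∈ allWords n,
        (if ρ' = ρw ∧ ρw <:+: σ
          then F w / ((B.card - (A ∩ B).card + 1).factorial : ℝ) else 0)
        = (if ρ' = ρw
          then F w / ((B.card - (A ∩ B).card + 1).factorial : ℝ) else 0) := by
      intro ρ' _
      exact if_congr (by tauto) rfl rfl
    rw [Finset.sum_congr rfl this, Finset.sum_ite_eq' (allWords n) ρw
      (fun _ => F w / ((B.card - (A ∩ B).card + 1).factorial : ℝ)), if_pos hρwall]
  · rw [if_neg hx]
    exact Finset.sum_eq_zero fun ρ' _ => if_neg (by tauto)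

end MainEval


lemma div_helper2 (x : ℝ) (N bf cf : ℕ) (h : N * bf = cf) (hbf : bf ≠ 0) (hcf : cf ≠ 0) :
    x * (N : ℝ) / (cf : ℝ) = x / (bf : ℝ) := by
  rw [div_eq_div_iff (by exact_mod_cast hcf) (by exact_mod_cast hbf), mul_assoc,
    show ((N : ℝ) * (bf : ℕ) = (cf : ℕ)) from by exact_mod_cast h]

/-- **Commutation of marginal and synthesis operators.**
Let `A, B, C ⊆ [n]` with `|A| ≥ 2`, `|B| ≥ 2`, `A ∪ B ⊆ C`, and `F ∈ L(Γ(A))`.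
If `|A ∩ B| ≥ 2` then `M_B (φ_C F) = φ_B (M_{A∩B} F)`;
if `|A ∩ B| ≤ 1` then `M_B (φ_C F)` is the constant `(Σ_{π∈Γ(A)} F π)/|B|!` on `Γ(B)`. -/
theorem marg_synth_commute {n : ℕ} (hn : 2 ≤ n)
    (A B C : Finset (Fin n)) (hA : 2 ≤ A.card) (hB : 2 ≤ B.card) (hC : A ∪ B ⊆ C)
    (F : Word n → ℝ) (hF : MemL A F) :
    (2 ≤ (A ∩ B).card → marg B (synth C F) = synth B (marg (A ∩ B) F)) ∧
    ((A ∩ B).card ≤ 1 →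
      marg B (synth C F) = fun σ =>
        if IsRanking B σ then (∑ π ∈ rankings n A, F π) / (Nat.factorial B.card : ℝ) else 0) := by
  have hAC : A ⊆ C := Finset.subset_union_left.trans hC
  have hBC : B ⊆ C := Finset.subset_union_right.trans hC
  constructor
  · intro hk
    funext σ
    by_cases hσ : IsRanking B σ
    case neg => rw [marg, synth, if_neg hσ, if_neg hσ]
    rw [marg_synth_eval hA hF hσ, synth_marg_eval hA hF hk hσ]
    apply Finset.sum_congr rfl
    intro w hw
    have hwA := mem_rankings.1 hw
    set ρw := w.filter (fun a => decide (a ∈ B)) with hρw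
    by_cases hx : ρw <:+: σ
    · rw [if_pos hx]
      have hρne : ρw ≠ [] := by
        intro e
        have hl := restrict_length (B := B) hwA
        rw [← hρw, e] at hl
        simp at hl
        omega
      have hcnt := count_pos hσ hwA hAC hBC hx hρne
      exact div_helper2 _ _ _ _ hcnt (Nat.factorial_ne_zero _) (Nat.factorial_ne_zero _)
    · rw [if_neg hx]
      have hN : ((allWords n).filter
          (fun τ => IsRanking C τ ∧ σ <+ τ ∧ w <:+: τ)).card = 0 := by
        rw [Finset.card_eq_zero, Finset.filter_eq_empty_iff]
        rintro τ hτ ⟨h1, h2, h3⟩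
        exact hx (infix_of_common hσ hwA h1 h2 h3)
      rw [hN]
      simp
  · intro hk
    funext σ
    by_cases hσ : IsRanking B σ
    case neg =>
      show marg B (synth C F) σ
        = if IsRanking B σ then (∑ π ∈ rankings n A, F π) / (B.card.factorial : ℝ) else 0
      rw [marg, if_neg hσ, if_neg hσ]
    show marg B (synth C F) σ
      = if IsRanking B σ then (∑ π ∈ rankings n A, F π) / (B.card.factorial : ℝ) else 0
    rw [marg_synth_eval hA hF hσ, if_pos hσ, Finset.sum_div]
    apply Finset.sum_congr rfl
    intro w hw
    have hwA := mem_rankings.1 hw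
    have hwne : w ≠ [] := ranking_ne_nil hwA (by omega)
    interval_cases hABc : (A ∩ B).card
    · -- card = 0
      have hAB : A ∩ B = ∅ := Finset.card_eq_zero.1 hABc
      have hcnt := count_empty hσ hwA hAC hBC hAB hwne
      exact div_helper2 _ _ _ _ hcnt (Nat.factorial_ne_zero _) (Nat.factorial_ne_zero _)
    · -- card = 1
      set ρw := w.filter (fun a => decide (a ∈ B)) with hρw
      have hl : ρw.length = 1 := by
        rw [hρw, restrict_length hwA, hABc]
      obtain ⟨a, ha⟩ := List.length_eq_one_iff.1 hl
      have haσ : a ∈ σ := by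
        have : a ∈ ρw := ha ▸ List.mem_singleton_self a
        have h2 : a ∈ A ∩ B := by
          rw [← restrict_toFinset (B := B) hwA]
          exact List.mem_toFinset.2 this
        rw [← List.mem_toFinset, hσ.2]
        exact (Finset.mem_inter.1 h2).2
      obtain ⟨s, t, hst⟩ := List.mem_iff_append.1 haσ
      have hx : ρw <:+: σ := ⟨s, t, by rw [ha, hst]; simp⟩
      have hρne : ρw ≠ [] := by rw [ha]; simp
      have hcnt := count_pos hσ hwA hAC hBC hx hρne
      rw [hABc, show B.card - 1 + 1 = B.card from by omega] at hcnt
      exact div_helper2 _ _ _ _ hcnt (Nat.factorial_ne_zero _) (Nat.factorial_ne_zero _)
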